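/- Let G be a finite simple graph and let I be the matroidal ideal attached to the graphic matroid of G (generated by the monomials u_F = ∏_{e_i ∈ E(F)} x_i over all spanning forests F of G). If G is biconnected (equivalently, the maximal ideal m is in the stable set of associated primes of I), then the linear relation graph Γ of I is a complete graph on the edge-index set of G. -/

import Mathlib

open MvPolynomial

/-- The square-free monomial `∏_{i ∈ S} x_i`. -/
noncomputable def sqMon (K : Type*) [Field K] {n : ℕ} (S : Finset (Fin n)) :
    MvPolynomial (Fin n) K := ∏ i ∈ S, X i

/-- For a graph `G` whose edges are enumerated by `e : Fin n → Sym2 V`, the index set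
`S ⊆ Fin n` is (the edge-index set of) a maximal spanning forest of `G`; since the graphs
considered here are connected, this means a spanning tree: the graph on the vertices of
`G` with edge set `e '' S` is connected and acyclic. -/
def IsSpanningForestIdx {V : Type*} {n : ℕ} (e : Fin n → Sym2 V)
    (S : Finset (Fin n)) : Prop :=
  (SimpleGraph.fromEdgeSet (e '' ↑S)).Connected ∧
    (SimpleGraph.fromEdgeSet (e '' ↑S)).IsAcyclic

namespace Stmt1Aux

open SimpleGraph Walk

variable {V : Type*}

/-- From connectivity of `G - w`, a walk between vertices `≠ w` avoiding `w`. -/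
lemma walk_avoid {G : SimpleGraph V} {w : V}
    (h : (G.induce {t | t ≠ w}).Connected) {u v : V} (hu : u ≠ w) (hv : v ≠ w) :
    ∃ p : G.Walk u v, w ∉ p.support := by
  obtain ⟨q⟩ := h ⟨u, hu⟩ ⟨v, hv⟩
  refine ⟨q.map (SimpleGraph.Embedding.induce ({t | t ≠ w} : Set V)).toHom, ?_⟩
  intro hw
  replace hw : w ∈ q.support.map (SimpleGraph.Embedding.induce (G := G) ({t | t ≠ w} : Set V)).toHom := by
    rw [← Walk.support_map]; exact hw
  obtain ⟨⟨t, ht⟩, -, h2⟩ := List.mem_map.mp hw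
  exact ht h2

lemma reach_of_walk {G : SimpleGraph V} {u v : V} (p : G.Walk u v) :
    (SimpleGraph.fromEdgeSet {z | z ∈ p.edges}).Reachable u v := by
  induction p with
  | nil => exact Reachable.refl _
  | @cons a b c h q ih =>
    refine (SimpleGraph.Adj.reachable ?_).trans
      (ih.mono (SimpleGraph.fromEdgeSet_mono ?_))
    · exact (SimpleGraph.fromEdgeSet_adj _).mpr ⟨by simp, h.ne⟩
    · intro z hz; simp only [Set.mem_setOf_eq] at hz ⊢; simp [hz]

lemma reach_isolated {s : Set (Sym2 V)} {u v : V}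
    (hu : ∀ z ∈ s, u ∉ z) (h : (SimpleGraph.fromEdgeSet s).Reachable u v) : v = u := by
  obtain ⟨p⟩ := h
  cases p with
  | nil => rfl
  | cons hadj q =>
    obtain ⟨hz, -⟩ := (SimpleGraph.fromEdgeSet_adj _).mp hadj
    exact absurd (Sym2.mem_mk_left _ _) (hu _ hz)

lemma reach_invariant {s : Set (Sym2 V)} {A : Set V}
    (hA : ∀ z ∈ s, ∀ x y : V, z = s(x, y) → (x ∈ A ↔ y ∈ A)) {u v : V}
    (h : (SimpleGraph.fromEdgeSet s).Reachable u v) (hu : u ∈ A) : v ∈ A := by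
  obtain ⟨p⟩ := h
  induction p with
  | nil => exact hu
  | @cons a b c hadj q ih =>
    obtain ⟨hz, -⟩ := (SimpleGraph.fromEdgeSet_adj _).mp hadj
    exact ih ((hA _ hz a b rfl).mp hu)

lemma firstHit_walk {G : SimpleGraph V} {v u : V} (p : G.Walk v u) (S : Set V)
    (hu : u ∈ S) :
    ∃ z ∈ S, ∃ q : G.Walk v z, (∀ t ∈ q.support, t ∈ p.support) ∧
      (∀ t ∈ q.support, t ∈ S → t = z) := by
  induction p with
  | nil =>
    exact ⟨_, hu, Walk.nil, by simp, fun t ht _ => by simpa using ht⟩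
  | @cons a b c h q ih =>
    by_cases ha : a ∈ S
    · exact ⟨a, ha, Walk.nil, by simp, fun t ht _ => by simpa using ht⟩
    · obtain ⟨z, hz, r, hsub, hlast⟩ := ih hu
      refine ⟨z, hz, Walk.cons h r, ?_, ?_⟩
      · intro t ht
        rw [Walk.support_cons] at ht ⊢
        rcases List.mem_cons.mp ht with h1 | h1
        · exact List.mem_cons.mpr (Or.inl h1)
        · exact List.mem_cons.mpr (Or.inr (hsub t h1))
      · intro t ht hts
        rw [Walk.support_cons] at ht
        rcases List.mem_cons.mp ht with rfl | h1
        · exact absurd hts ha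
        · exact hlast t h1 hts

lemma firstHit [DecidableEq V] {G : SimpleGraph V} {v u : V} (p : G.Walk v u) (S : Set V)
    (hu : u ∈ S) :
    ∃ z ∈ S, ∃ q : G.Walk v z, q.IsPath ∧ (∀ t ∈ q.support, t ∈ p.support) ∧
      (∀ t ∈ q.support, t ∈ S → t = z) := by
  obtain ⟨z, hz, q, h1, h2⟩ := firstHit_walk p S hu
  exact ⟨z, hz, q.bypass, q.bypass_isPath,
    fun t ht => h1 t (q.support_bypass_subset ht),
    fun t ht => h2 t (q.support_bypass_subset ht)⟩

lemma notMem_takeUntil [DecidableEq V] {G : SimpleGraph V} {u w v : V} {p : G.Walk u w}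
    (hp : p.IsPath) (hv : v ∈ p.support) (hvw : v ≠ w) :
    w ∉ (p.takeUntil v hv).support := by
  intro hw
  have hspec := p.take_spec hv
  have hnodup : p.support.Nodup := hp.support_nodup
  rw [← hspec, Walk.support_append] at hnodup
  have hw' : w ∈ (p.dropUntil v hv).support.tail := by
    have hend : w ∈ (p.dropUntil v hv).support := Walk.end_mem_support _
    rw [Walk.support_eq_cons] at hend
    rcases List.mem_cons.mp hend with rfl | h1
    · exact absurd rfl hvw.symm
    · exact h1
  exact (List.disjoint_of_nodup_append hnodup) hw hw'

lemma notMem_dropUntil [DecidableEq V] {G : SimpleGraph V} {u w v : V} {p : G.Walk u w}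
    (hp : p.IsPath) (hv : v ∈ p.support) (hvu : v ≠ u) :
    u ∉ (p.dropUntil v hv).support := by
  intro hw
  have hspec := p.take_spec hv
  have hnodup : p.support.Nodup := hp.support_nodup
  rw [← hspec, Walk.support_append] at hnodup
  have hu' : u ∈ (p.takeUntil v hv).support := Walk.start_mem_support _
  have hw' : u ∈ (p.dropUntil v hv).support.tail := by
    rw [Walk.support_eq_cons] at hw
    rcases List.mem_cons.mp hw with rfl | h1
    · exact absurd rfl hvu
    · exact h1
  exact (List.disjoint_of_nodup_append hnodup) hu' hw'

lemma append_isPath {G : SimpleGraph V} {u z v : V} {p : G.Walk u z} {q : G.Walk z v}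
    (hp : p.IsPath) (hq : q.IsPath)
    (hdisj : ∀ t, t ∈ p.support → t ∈ q.support → t = z) :
    (p.append q).IsPath := by
  rw [Walk.isPath_def, Walk.support_append]
  apply List.Nodup.append hp.support_nodup
  · have := hq.support_nodup
    rw [Walk.support_eq_cons] at this
    exact this.of_cons
  · intro t htp htq
    have htq' : t ∈ q.support := by
      rw [Walk.support_eq_cons]; exact List.mem_cons.mpr (Or.inr htq)
    have := hdisj t htp htq'
    subst this
    have := hq.support_nodup
    rw [Walk.support_eq_cons] at this
    exact (List.nodup_cons.mp this).1 htq

lemma reach_strip {H : SimpleGraph V} {p q u v : V} (h : H.Reachable u v) :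
    (H.deleteEdges {s(p, q)}).Reachable u v ∨
      ((H.deleteEdges {s(p, q)}).Reachable u p ∧ (H.deleteEdges {s(p, q)}).Reachable q v) ∨
      ((H.deleteEdges {s(p, q)}).Reachable u q ∧ (H.deleteEdges {s(p, q)}).Reachable p v) := by
  obtain ⟨w⟩ := h
  induction w with
  | nil => exact Or.inl (Reachable.refl _)
  | @cons a b c hadj w ih =>
    by_cases he : s(a, b) = s(p, q)
    · rw [Sym2.eq_iff] at he
      rcases he with ⟨rfl, rfl⟩ | ⟨rfl, rfl⟩
      · rcases ih with h1 | ⟨h1, h2⟩ | ⟨h1, h2⟩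
        · exact Or.inr (Or.inl ⟨Reachable.refl _, h1⟩)
        · exact Or.inr (Or.inl ⟨Reachable.refl _, h2⟩)
        · exact Or.inl h2
      · rcases ih with h1 | ⟨h1, h2⟩ | ⟨h1, h2⟩
        · exact Or.inr (Or.inr ⟨Reachable.refl _, h1⟩)
        · exact Or.inl h2
        · exact Or.inr (Or.inr ⟨Reachable.refl _, h2⟩)
    · have hadj' : (H.deleteEdges {s(p, q)}).Adj a b := by simp [hadj, he]
      rcases ih with h1 | ⟨h1, h2⟩ | ⟨h1, h2⟩
      · exact Or.inl (hadj'.reachable.trans h1)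
      · exact Or.inr (Or.inl ⟨hadj'.reachable.trans h1, h2⟩)
      · exact Or.inr (Or.inr ⟨hadj'.reachable.trans h1, h2⟩)

lemma reach_sides {T : SimpleGraph V} {a b v : V} (hc : T.Reachable v a) :
    (T.deleteEdges {s(a, b)}).Reachable v a ∨ (T.deleteEdges {s(a, b)}).Reachable v b := by
  rcases reach_strip (p := a) (q := b) hc with h1 | ⟨h1, h2⟩ | ⟨h1, h2⟩
  · exact Or.inl h1
  · exact Or.inl h1
  · exact Or.inr h1

lemma connected_deleteEdges_of_reach {H : SimpleGraph V} (hc : H.Connected) {p q : V}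
    (hr : (H.deleteEdges {s(p, q)}).Reachable p q) : (H.deleteEdges {s(p, q)}).Connected := by
  rw [SimpleGraph.connected_iff]
  refine ⟨fun u v => ?_, hc.nonempty⟩
  rcases reach_strip (p := p) (q := q) (hc u v) with h1 | ⟨h1, h2⟩ | ⟨h1, h2⟩
  · exact h1
  · exact (h1.trans hr).trans h2
  · exact (h1.trans hr.symm).trans h2

lemma connected_deleteEdge_of_biconn [Fintype V] [DecidableEq V] {G : SimpleGraph V}
    (hconn : G.Connected) (hcut : ∀ v : V, (G.induce {w | w ≠ v}).Connected)
    (hcard : 3 ≤ Fintype.card V) {a b : V} (hab : G.Adj a b) :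
    (G.deleteEdges {s(a, b)}).Connected := by
  have key : ∀ u v : V, u ≠ a → v ≠ a → (G.deleteEdges {s(a, b)}).Reachable u v := by
    intro u v hu hv
    obtain ⟨p, hp⟩ := walk_avoid (hcut a) hu hv
    refine ⟨p.toDeleteEdges _ ?_⟩
    intro z hz
    simp only [Set.mem_singleton_iff]
    rintro rfl
    exact hp (p.fst_mem_support_of_mem_edges hz)
  obtain ⟨t, ht⟩ : ∃ t : V, t ≠ a ∧ t ≠ b := by
    have hne : ({a, b}ᶜ : Finset V).Nonempty := by
      rw [← Finset.card_pos, Finset.card_compl]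
      have h2 : ({a, b} : Finset V).card ≤ 2 :=
        (Finset.card_insert_le _ _).trans (by simp)
      omega
    obtain ⟨t, ht⟩ := hne
    rw [Finset.mem_compl, Finset.mem_insert, Finset.mem_singleton] at ht
    push_neg at ht
    exact ⟨t, ht⟩
  obtain ⟨p, hp⟩ := walk_avoid (hcut b) hab.ne ht.2
  have hreach_a : ∃ w : V, w ≠ a ∧ (G.deleteEdges {s(a, b)}).Reachable a w := by
    cases p with
    | nil => exact absurd rfl ht.1
    | @cons _ w _ hadj q =>
      have hwb : w ≠ b := by
        rintro rfl
        exact hp (by rw [Walk.support_cons]; exact List.mem_cons.mpr (Or.inr (Walk.start_mem_support q)))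
      refine ⟨w, hadj.ne', Adj.reachable ?_⟩
      rw [SimpleGraph.deleteEdges_adj]
      refine ⟨hadj, ?_⟩
      simp only [Set.mem_singleton_iff, Sym2.eq_iff]
      rintro (⟨-, rfl⟩ | ⟨rfl, rfl⟩)
      · exact hwb rfl
      · exact hab.ne rfl
  obtain ⟨w, hwa, hw⟩ := hreach_a
  rw [SimpleGraph.connected_iff]
  refine ⟨fun u v => ?_, hconn.nonempty⟩
  by_cases hu : u = a <;> by_cases hv : v = a
  · subst hu; subst hv; exact Reachable.refl _
  · subst hu; exact hw.trans (key w v hwa hv)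
  · subst hv; exact ((key u w hu hwa).trans hw.symm)
  · exact key u v hu hv

lemma mem_support_of_mem_edges' {G : SimpleGraph V} {u v t : V} {p : G.Walk u v}
    {z : Sym2 V} (hz : z ∈ p.edges) (ht : t ∈ z) : t ∈ p.support := by
  induction z with
  | _ x y =>
    rcases Sym2.mem_iff.mp ht with rfl | rfl
    · exact p.fst_mem_support_of_mem_edges hz
    · exact p.snd_mem_support_of_mem_edges hz

lemma fromEdgeSet_deleteEdges (A B : Set (Sym2 V)) :
    (SimpleGraph.fromEdgeSet A).deleteEdges B = SimpleGraph.fromEdgeSet (A \ B) := by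
  ext x y
  simp only [SimpleGraph.deleteEdges_adj, SimpleGraph.fromEdgeSet_adj, Set.mem_diff]
  tauto

lemma edgeSet_fromEdgeSet_of_nondiag {s : Set (Sym2 V)} (hnd : ∀ z ∈ s, ¬z.IsDiag) :
    (SimpleGraph.fromEdgeSet s).edgeSet = s := by
  rw [SimpleGraph.edgeSet_fromEdgeSet]
  ext z
  simp only [Set.mem_diff, Set.mem_setOf_eq]
  exact ⟨fun h => h.1, fun h => ⟨h, hnd z h⟩⟩

lemma sdiff_fromEdgeSet (A B : Set (Sym2 V)) :
    SimpleGraph.fromEdgeSet A \ SimpleGraph.fromEdgeSet B =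
      SimpleGraph.fromEdgeSet (A \ B) := by
  ext x y
  simp only [SimpleGraph.sdiff_adj, SimpleGraph.fromEdgeSet_adj, Set.mem_diff]
  tauto

lemma add_edge_acyclic {s : Set (Sym2 V)} {p q : V} (hpq : p ≠ q)
    (hacy : (SimpleGraph.fromEdgeSet s).IsAcyclic)
    (hnr : ¬(SimpleGraph.fromEdgeSet s).Reachable p q) :
    (SimpleGraph.fromEdgeSet (s ∪ {s(p, q)})).IsAcyclic := by
  have hzs : s(p, q) ∉ s := by
    intro hmem
    exact hnr (SimpleGraph.Adj.reachable ((SimpleGraph.fromEdgeSet_adj _).mpr ⟨hmem, hpq⟩))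
  rw [SimpleGraph.isAcyclic_iff_forall_adj_isBridge]
  intro v w hadj
  obtain ⟨hmem, hvw⟩ := (SimpleGraph.fromEdgeSet_adj _).mp hadj
  rw [SimpleGraph.isBridge_iff]
  by_cases he : s(v, w) = s(p, q)
  · intro hr
    rw [SimpleGraph.deleteEdges] at hr
    have hdel : (SimpleGraph.fromEdgeSet (s ∪ {s(p, q)})) \
        SimpleGraph.fromEdgeSet {s(v, w)} = SimpleGraph.fromEdgeSet s := by
      rw [sdiff_fromEdgeSet]
      congr 1
      rw [he]
      ext z
      simp only [Set.mem_diff, Set.mem_union, Set.mem_singleton_iff]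
      constructor
      · rintro ⟨h1 | h1, h2⟩
        · exact h1
        · exact absurd h1 h2
      · intro h1
        exact ⟨Or.inl h1, fun h2 => hzs (h2 ▸ h1)⟩
    rw [hdel] at hr
    rw [Sym2.eq_iff] at he
    rcases he with ⟨rfl, rfl⟩ | ⟨rfl, rfl⟩
    · exact hnr hr
    · exact hnr hr.symm
  · intro hr
    rw [SimpleGraph.deleteEdges] at hr
    have hmem' : s(v, w) ∈ s := by
      rcases hmem with h1 | h1
      · exact h1
      · exact absurd h1 he
    have hbr := (SimpleGraph.isAcyclic_iff_forall_adj_isBridge.mp hacy)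
      ((SimpleGraph.fromEdgeSet_adj _).mpr ⟨hmem', hvw⟩)
    rw [SimpleGraph.isBridge_iff] at hbr
    have hbr2 := hbr
    have hdel1 : (SimpleGraph.fromEdgeSet (s ∪ {s(p, q)})) \
        SimpleGraph.fromEdgeSet {s(v, w)} =
        SimpleGraph.fromEdgeSet ((s \ {s(v, w)}) ∪ {s(p, q)}) := by
      rw [sdiff_fromEdgeSet]
      congr 1
      ext z
      simp only [Set.mem_diff, Set.mem_union, Set.mem_singleton_iff]
      constructor
      · rintro ⟨h1 | h1, h2⟩
        · exact Or.inl ⟨h1, h2⟩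
        · exact Or.inr h1
      · rintro (⟨h1, h2⟩ | h1)
        · exact ⟨Or.inl h1, h2⟩
        · exact ⟨Or.inr h1, fun h2 => he (by rw [← h2, h1])⟩
    rw [hdel1] at hr
    have hdel2 : (SimpleGraph.fromEdgeSet ((s \ {s(v, w)}) ∪ {s(p, q)})).deleteEdges
        {s(p, q)} = SimpleGraph.fromEdgeSet (s \ {s(v, w)}) := by
      rw [fromEdgeSet_deleteEdges]
      congr 1
      ext z
      simp only [Set.mem_diff, Set.mem_union, Set.mem_singleton_iff]
      constructor
      · rintro ⟨h1 | h1, h2⟩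
        · exact h1
        · exact absurd h1 h2
      · intro h1
        exact ⟨Or.inl h1, fun h2 => hzs (h2 ▸ h1.1)⟩
    have hmono : SimpleGraph.fromEdgeSet (s \ {s(v, w)}) ≤ SimpleGraph.fromEdgeSet s :=
      SimpleGraph.fromEdgeSet_mono Set.diff_subset
    have hdelold : SimpleGraph.fromEdgeSet (s \ {s(v, w)}) =
        (SimpleGraph.fromEdgeSet s) \ SimpleGraph.fromEdgeSet {s(v, w)} := by
      rw [sdiff_fromEdgeSet]
    have hadjS : (SimpleGraph.fromEdgeSet s).Adj v w :=
      (SimpleGraph.fromEdgeSet_adj _).mpr ⟨hmem', hvw⟩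
    rcases reach_strip (p := p) (q := q) hr with h1 | ⟨h1, h2⟩ | ⟨h1, h2⟩ <;>
      rw [hdel2] at *
    · exact hbr2 (by rwa [fromEdgeSet_deleteEdges])
    · exact hnr (((h1.mono hmono).symm.trans hadjS.reachable).trans (h2.mono hmono).symm)
    · exact hnr (((h2.mono hmono).trans hadjS.reachable.symm).trans (h1.mono hmono))

lemma path_union_acyclic {G : SimpleGraph V} {s : Set (Sym2 V)}
    (hacy : (SimpleGraph.fromEdgeSet s).IsAcyclic) {u v : V} (p : G.Walk u v)
    (hp : p.IsPath) (hdisj : ∀ t ∈ p.support, ∀ z ∈ s, t ∉ z) :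
    (SimpleGraph.fromEdgeSet (s ∪ {z | z ∈ p.edges})).IsAcyclic := by
  induction p with
  | nil =>
    have h0 : {z : Sym2 V | z ∈ ([] : List (Sym2 V))} = ∅ := by ext z; simp
    rw [Walk.edges_nil, h0, Set.union_empty]
    exact hacy
  | @cons a b c h q ih =>
    have hsupp : ∀ t ∈ q.support, t ∈ (Walk.cons h q).support := by
      intro t ht
      rw [Walk.support_cons]
      exact List.mem_cons.mpr (Or.inr ht)
    have hq := ih hp.of_cons (fun t ht z hz => hdisj t (hsupp t ht) z hz)
    have hset : (s ∪ {z | z ∈ (Walk.cons h q).edges}) =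
        (s ∪ {z | z ∈ q.edges}) ∪ {s(a, b)} := by
      ext z
      simp only [Walk.edges_cons, Set.mem_union, Set.mem_setOf_eq, List.mem_cons,
        Set.mem_singleton_iff]
      tauto
    rw [hset]
    apply add_edge_acyclic h.ne hq
    intro hr
    have hba : b = a := by
      refine reach_isolated ?_ hr
      intro z hz haz
      rcases hz with h1 | h1
      · exact hdisj a (Walk.start_mem_support _) z h1 haz
      · exact ((Walk.cons_isPath_iff h q).mp hp).2 (mem_support_of_mem_edges' h1 haz)
    exact h.ne hba.symm

lemma exists_cross_edge {H B : SimpleGraph V} {u v : V} (w : H.Walk u v)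
    (hnr : ¬B.Reachable u v) : ∃ p q : V, H.Adj p q ∧ ¬B.Reachable p q := by
  induction w with
  | nil => exact absurd (Reachable.refl _) hnr
  | @cons a b c h q ih =>
    by_cases hr : B.Reachable a b
    · exact ih (fun h2 => hnr (hr.trans h2))
    · exact ⟨a, b, h, hr⟩

lemma exists_spanning_tree_aux [Fintype V] {H : SimpleGraph V} (hc : H.Connected) :
    ∀ (k : ℕ) (s : Set (Sym2 V)), (H.edgeSet \ s).ncard ≤ k → s ⊆ H.edgeSet →
      (SimpleGraph.fromEdgeSet s).IsAcyclic →
      ∃ t, s ⊆ t ∧ t ⊆ H.edgeSet ∧ (SimpleGraph.fromEdgeSet t).Connected ∧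
        (SimpleGraph.fromEdgeSet t).IsAcyclic := by
  intro k
  induction k with
  | zero =>
    intro s hcard hsub hacy
    refine ⟨s, subset_rfl, hsub, ?_, hacy⟩
    rw [SimpleGraph.connected_iff]
    refine ⟨fun u v => ?_, hc.nonempty⟩
    by_contra hnr
    obtain ⟨w⟩ := hc u v
    obtain ⟨p', q', hadj, hnr'⟩ := exists_cross_edge w hnr
    have hpq : s(p', q') ∈ H.edgeSet \ s := by
      refine ⟨(SimpleGraph.mem_edgeSet _).mpr hadj, ?_⟩
      intro hmem
      exact hnr' (SimpleGraph.Adj.reachable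
        ((SimpleGraph.fromEdgeSet_adj _).mpr ⟨hmem, hadj.ne⟩))
    have hpos : 0 < (H.edgeSet \ s).ncard :=
      (Set.ncard_pos (Set.toFinite _)).mpr ⟨_, hpq⟩
    omega
  | succ k ih =>
    intro s hcard hsub hacy
    by_cases hcon : (SimpleGraph.fromEdgeSet s).Connected
    · exact ⟨s, subset_rfl, hsub, hcon, hacy⟩
    obtain ⟨u, v, hnr⟩ : ∃ u v, ¬(SimpleGraph.fromEdgeSet s).Reachable u v := by
      by_contra hno
      push_neg at hno
      exact hcon ((SimpleGraph.connected_iff _).mpr ⟨fun u v => hno u v, hc.nonempty⟩)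
    obtain ⟨w⟩ := hc u v
    obtain ⟨p', q', hadj, hnr'⟩ := exists_cross_edge w hnr
    have hpqE : s(p', q') ∈ H.edgeSet := (SimpleGraph.mem_edgeSet _).mpr hadj
    have hpqs : s(p', q') ∉ s := fun hmem => hnr' (SimpleGraph.Adj.reachable
      ((SimpleGraph.fromEdgeSet_adj _).mpr ⟨hmem, hadj.ne⟩))
    have hacy' := add_edge_acyclic hadj.ne hacy hnr'
    have hsub' : s ∪ {s(p', q')} ⊆ H.edgeSet := by
      rw [Set.union_subset_iff]
      exact ⟨hsub, by simpa using hpqE⟩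
    have hcard' : (H.edgeSet \ (s ∪ {s(p', q')})).ncard ≤ k := by
      have hset : H.edgeSet \ (s ∪ {s(p', q')}) = (H.edgeSet \ s) \ {s(p', q')} := by
        ext z
        simp only [Set.mem_diff, Set.mem_union, Set.mem_singleton_iff]
        tauto
      rw [hset]
      have hmem : s(p', q') ∈ H.edgeSet \ s := ⟨hpqE, hpqs⟩
      have hlt := Set.ncard_diff_singleton_lt_of_mem hmem (Set.toFinite _)
      omega
    obtain ⟨t, h1, h2, h3, h4⟩ := ih (s ∪ {s(p', q')}) hcard' hsub' hacy'
    exact ⟨t, Set.subset_union_left.trans h1, h2, h3, h4⟩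

lemma exists_spanning_tree [Fintype V] {H : SimpleGraph V} (hc : H.Connected)
    {s : Set (Sym2 V)} (hsub : s ⊆ H.edgeSet)
    (hacy : (SimpleGraph.fromEdgeSet s).IsAcyclic) :
    ∃ t, s ⊆ t ∧ t ⊆ H.edgeSet ∧ (SimpleGraph.fromEdgeSet t).Connected ∧
      (SimpleGraph.fromEdgeSet t).IsAcyclic :=
  exists_spanning_tree_aux hc _ s le_rfl hsub hacy

lemma tree_set_ncard [Fintype V] {t : Set (Sym2 V)} (hnd : ∀ z ∈ t, ¬z.IsDiag)
    (hc : (SimpleGraph.fromEdgeSet t).Connected)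
    (ha : (SimpleGraph.fromEdgeSet t).IsAcyclic) :
    t.ncard + 1 = Fintype.card V := by
  classical
  have htree : (SimpleGraph.fromEdgeSet t).IsTree := ⟨hc, ha⟩
  have hedge : (SimpleGraph.fromEdgeSet t).edgeSet = t :=
    edgeSet_fromEdgeSet_of_nondiag hnd
  haveI : Fintype ↥(SimpleGraph.fromEdgeSet t).edgeSet := Fintype.ofFinite _
  have hcard := htree.card_edgeFinset
  have h2 : (SimpleGraph.fromEdgeSet t).edgeFinset = t.toFinset :=
    Set.toFinset_congr hedge
  rw [← hcard, h2, Set.ncard_eq_toFinset_card']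

lemma card_le_of_connected [Fintype V] {H : SimpleGraph V} (hc : H.Connected) :
    Fintype.card V ≤ H.edgeSet.ncard + 1 := by
  obtain ⟨t, -, hsub, htc, hta⟩ := exists_spanning_tree hc (s := (∅ : Set (Sym2 V)))
    (Set.empty_subset _)
    (by rw [SimpleGraph.fromEdgeSet_empty]; exact SimpleGraph.isAcyclic_bot)
  have hnd : ∀ z ∈ t, ¬z.IsDiag := fun z hz =>
    SimpleGraph.not_isDiag_of_mem_edgeSet _ (hsub hz)
  have h1 := tree_set_ncard hnd htc hta
  have hle : t.ncard ≤ H.edgeSet.ncard := Set.ncard_le_ncard hsub (Set.toFinite _)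
  omega

lemma acyclic_of_connected_card [Fintype V] {s : Set (Sym2 V)}
    (hnd : ∀ z ∈ s, ¬z.IsDiag) (hc : (SimpleGraph.fromEdgeSet s).Connected)
    (hcard : s.ncard + 1 ≤ Fintype.card V) : (SimpleGraph.fromEdgeSet s).IsAcyclic := by
  by_contra h
  rw [SimpleGraph.isAcyclic_iff_forall_adj_isBridge] at h
  push_neg at h
  obtain ⟨p, q, hadj, hnb⟩ := h
  rw [SimpleGraph.isBridge_iff] at hnb
  push_neg at hnb
  have hr := hnb
  have hmem : s(p, q) ∈ s := ((SimpleGraph.fromEdgeSet_adj _).mp hadj).1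
  have hr' : ((SimpleGraph.fromEdgeSet s).deleteEdges {s(p, q)}).Reachable p q := hr
  have hconn' := connected_deleteEdges_of_reach hc hr'
  rw [fromEdgeSet_deleteEdges] at hconn'
  have hbound := card_le_of_connected hconn'
  have hedge : (SimpleGraph.fromEdgeSet (s \ {s(p, q)})).edgeSet = s \ {s(p, q)} :=
    edgeSet_fromEdgeSet_of_nondiag (fun z hz => hnd z hz.1)
  rw [hedge] at hbound
  have hncard : (s \ {s(p, q)}).ncard < s.ncard :=
    Set.ncard_diff_singleton_lt_of_mem hmem (Set.toFinite _)
  omega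

section TwoConn

variable {G : SimpleGraph V}

lemma extend1 {u w v : V} {P Q : G.Walk u w} (hP : P.IsPath) (hQ : Q.IsPath)
    (hdisj : ∀ t, t ∈ P.support → t ∈ Q.support → t = u ∨ t = w)
    (hwv : G.Adj w v) (hvP : v ∈ P.support) (hvu : v ≠ u) (hvw : v ≠ w) :
    ∃ p q : G.Walk u v, p.IsPath ∧ q.IsPath ∧
      (∀ t, t ∈ p.support → t ∈ q.support → t = u ∨ t = v) := by
  classical
  have hvQ : v ∉ Q.support := by
    intro h
    rcases hdisj v hvP h with h1 | h1
    · exact hvu h1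
    · exact hvw h1
  refine ⟨P.takeUntil v hvP, Q.append (Walk.cons hwv Walk.nil),
    hP.takeUntil hvP, ?_, ?_⟩
  · refine append_isPath hQ (by simp [Walk.isPath_def, hwv.ne]) ?_
    intro t htQ htc
    simp only [Walk.support_cons, Walk.support_nil, List.mem_cons,
      List.mem_singleton] at htc
    rcases htc with rfl | rfl | h
    · rfl
    · exact absurd htQ hvQ
    · exact absurd h (List.not_mem_nil)
  · intro t htp htq
    rw [Walk.support_append] at htq
    rcases List.mem_append.mp htq with h1 | h1
    · have h2 : t ∈ P.support := Walk.support_takeUntil_subset _ _ htp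
      rcases hdisj t h2 h1 with h3 | h3
      · exact Or.inl h3
      · subst h3
        exact absurd htp (notMem_takeUntil hP hvP hvw)
    · simp only [Walk.support_cons, Walk.support_nil, List.tail_cons,
        List.mem_singleton] at h1
      exact Or.inr h1

lemma extend2 {u w v z : V} {P Q : G.Walk u w} (hP : P.IsPath) (hQ : Q.IsPath)
    (hdisj : ∀ t, t ∈ P.support → t ∈ Q.support → t = u ∨ t = w)
    (hwv : G.Adj w v) (hvP : v ∉ P.support) (hvQ : v ∉ Q.support)
    {R : G.Walk v z} (hR : R.IsPath) (hzP : z ∈ P.support)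
    (hRw : w ∉ R.support)
    (hRS : ∀ t, t ∈ R.support → (t ∈ P.support ∨ t ∈ Q.support) → t = z)
    (hzu : z ≠ u) (hzw : z ≠ w) :
    ∃ p q : G.Walk u v, p.IsPath ∧ q.IsPath ∧
      (∀ t, t ∈ p.support → t ∈ q.support → t = u ∨ t = v) := by
  classical
  have hzQ : z ∉ Q.support := by
    intro h
    rcases hdisj z hzP h with h1 | h1
    · exact hzu h1
    · exact hzw h1
  have hmemR : ∀ t, t ∈ R.reverse.support → t ∈ R.support := by
    intro t ht
    rwa [Walk.support_reverse, List.mem_reverse] at ht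
  refine ⟨(P.takeUntil z hzP).append R.reverse, Q.append (Walk.cons hwv Walk.nil),
    ?_, ?_, ?_⟩
  · refine append_isPath (hP.takeUntil hzP) hR.reverse ?_
    intro t htp htr
    exact hRS t (hmemR t htr) (Or.inl (Walk.support_takeUntil_subset _ _ htp))
  · refine append_isPath hQ (by simp [Walk.isPath_def, hwv.ne]) ?_
    intro t htQ htc
    simp only [Walk.support_cons, Walk.support_nil, List.mem_cons,
      List.mem_singleton] at htc
    rcases htc with rfl | rfl | h
    · rfl
    · exact absurd htQ hvQ
    · exact absurd h (List.not_mem_nil)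
  · intro t htp htq
    rw [Walk.support_append] at htp htq
    have htq' : t ∈ Q.support ∨ t = v := by
      rcases List.mem_append.mp htq with h1 | h1
      · exact Or.inl h1
      · simp only [Walk.support_cons, Walk.support_nil, List.tail_cons,
          List.mem_singleton] at h1
        exact Or.inr h1
    rcases htq' with h1 | rfl
    · rcases List.mem_append.mp htp with h2 | h2
      · have h3 : t ∈ P.support :=
          Walk.support_takeUntil_subset _ _ h2
        rcases hdisj t h3 h1 with h4 | h4
        · exact Or.inl h4
        · subst h4
          exact absurd h2 (notMem_takeUntil hP hzP hzw)
      · have h3 : t ∈ R.support := by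
          have := List.mem_of_mem_tail h2
          rwa [Walk.support_reverse, List.mem_reverse] at this
        have := hRS t h3 (Or.inr h1)
        subst this
        exact absurd h1 hzQ
    · exact Or.inr rfl

variable [Fintype V] [DecidableEq V]

lemma two_paths (hconn : G.Connected)
    (hcut : ∀ v : V, (G.induce {w | w ≠ v}).Connected)
    (hcard : 3 ≤ Fintype.card V) :
    ∀ k : ℕ, ∀ u v : V, u ≠ v → G.dist u v ≤ k →
    ∃ p q : G.Walk u v, p.IsPath ∧ q.IsPath ∧
      (∀ t, t ∈ p.support → t ∈ q.support → t = u ∨ t = v) := by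
  intro k
  induction k with
  | zero =>
    intro u v huv hd
    exfalso
    exact huv ((hconn.dist_eq_zero_iff).mp (Nat.le_zero.mp hd))
  | succ k ih =>
    intro u v huv hd
    by_cases hadj : G.Adj u v
    · obtain ⟨W⟩ := (connected_deleteEdge_of_biconn hconn hcut hcard hadj) u v
      refine ⟨Walk.cons hadj Walk.nil, W.bypass.mapLe (SimpleGraph.deleteEdges_le _),
        by simp [Walk.isPath_def, hadj.ne], Walk.IsPath.mapLe _ (Walk.bypass_isPath _), ?_⟩
      intro t htp _
      simpa [Walk.support_cons, Walk.support_nil] using htp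
    · by_cases hdk : G.dist u v ≤ k
      · exact ih u v huv hdk
      have hdist : G.dist u v = k + 1 := le_antisymm hd (not_le.mp hdk)
      obtain ⟨W, hWlen⟩ := hconn.exists_walk_length_eq_dist u v
      have hWrev : W.reverse.length = k + 1 := by
        rw [Walk.length_reverse, hWlen, hdist]
      have hstep : ∃ w, G.Adj v w ∧ G.dist u w ≤ k := by
        cases hW : W.reverse with
        | nil =>
          exfalso
          rw [hW] at hWrev
          simp at hWrev
        | @cons _ w' _ h q =>
          refine ⟨w', h, ?_⟩
          have hlen : q.length = k := by
            have h2 := congrArg Walk.length hW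
            rw [hWrev] at h2
            simp only [Walk.length_cons] at h2
            omega
          have hle := SimpleGraph.dist_le q.reverse
          rwa [Walk.length_reverse, hlen] at hle
      obtain ⟨w, hvw, hdw⟩ := hstep
      have hwu : w ≠ u := by
        rintro rfl
        exact hadj hvw.symm
      obtain ⟨P, Q, hP, hQ, hdisj⟩ := ih u w (Ne.symm hwu) hdw
      have hwv : G.Adj w v := hvw.symm
      have hvu : v ≠ u := Ne.symm huv
      have hvwne : v ≠ w := hvw.ne
      by_cases hvP : v ∈ P.support
      · exact extend1 hP hQ hdisj hwv hvP hvu hvwne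
      by_cases hvQ : v ∈ Q.support
      · exact extend1 hQ hP (fun t a b => hdisj t b a) hwv hvQ hvu hvwne
      obtain ⟨W2, hW2⟩ := walk_avoid (hcut w) hvwne (Ne.symm hwu)
      have huS : u ∈ {t | t ∈ P.support ∨ t ∈ Q.support} :=
        Or.inl (Walk.start_mem_support _)
      obtain ⟨z, hzS, R, hRpath, hRsub, hRlast⟩ := firstHit W2 _ huS
      have hRw : w ∉ R.support := fun h => hW2 (hRsub _ h)
      have hzw : z ≠ w := fun h => hRw (h ▸ Walk.end_mem_support R)
      by_cases hzu : z = u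
      · subst hzu
        refine ⟨R.reverse, P.append (Walk.cons hwv Walk.nil), hRpath.reverse, ?_, ?_⟩
        · refine append_isPath hP (by simp [Walk.isPath_def, hwv.ne]) ?_
          intro t htP htc
          simp only [Walk.support_cons, Walk.support_nil, List.mem_cons,
            List.mem_singleton] at htc
          rcases htc with rfl | rfl | h
          · rfl
          · exact absurd htP hvP
          · exact absurd h (List.not_mem_nil)
        · intro t htp htq
          have htR : t ∈ R.support := by
            rwa [Walk.support_reverse, List.mem_reverse] at htp
          rw [Walk.support_append] at htq
          rcases List.mem_append.mp htq with h1 | h1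
          · exact Or.inl (hRlast t htR (Or.inl h1))
          · simp only [Walk.support_cons, Walk.support_nil, List.tail_cons,
              List.mem_singleton] at h1
            exact Or.inr h1
      · rcases hzS with hzP | hzQ
        · exact extend2 hP hQ hdisj hwv hvP hvQ hRpath hzP hRw
            (fun t ht hs => hRlast t ht hs) hzu hzw
        · exact extend2 hQ hP (fun t a b => hdisj t b a) hwv hvQ hvP hRpath hzQ hRw
            (fun t ht hs => hRlast t ht hs.symm) hzu hzw

lemma ve_helper1 {u c d : V} (hcd : G.Adj c d) (hud : u ≠ d)
    {P Q : G.Walk u c} (hP : P.IsPath) (hQ : Q.IsPath)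
    (hdisj : ∀ t, t ∈ P.support → t ∈ Q.support → t = u ∨ t = c)
    (hdP : d ∈ P.support) :
    ∃ (p : G.Walk u c) (q : G.Walk u d), p.IsPath ∧ q.IsPath ∧
      (∀ t, t ∈ p.support → t ∈ q.support → t = u) ∧
      s(c, d) ∉ p.edges ∧ s(c, d) ∉ q.edges := by
  classical
  have hdc : d ≠ c := hcd.ne'
  have hcnot : c ∉ (P.takeUntil d hdP).support := notMem_takeUntil hP hdP hdc
  have hdQ : d ∉ Q.support := by
    intro h
    rcases hdisj d hdP h with h1 | h1
    · exact hud h1.symm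
    · exact hdc h1
  refine ⟨Q, P.takeUntil d hdP, hQ, hP.takeUntil hdP, ?_, ?_, ?_⟩
  · intro t htQ htP'
    have htP : t ∈ P.support := Walk.support_takeUntil_subset _ _ htP'
    rcases hdisj t htP htQ with h1 | h1
    · exact h1
    · subst h1
      exact absurd htP' hcnot
  · intro hmem
    exact hdQ (mem_support_of_mem_edges' hmem (Sym2.mem_mk_right _ _))
  · intro hmem
    exact hcnot (mem_support_of_mem_edges' hmem (Sym2.mem_mk_left _ _))

lemma ve_helper2 {u c d z : V} (hcd : G.Adj c d)
    {P Q : G.Walk u c} (hP : P.IsPath) (hQ : Q.IsPath)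
    (hdisj : ∀ t, t ∈ P.support → t ∈ Q.support → t = u ∨ t = c)
    {R : G.Walk d z} (hR : R.IsPath) (hzP : z ∈ P.support)
    (hzu : z ≠ u) (hzc : z ≠ c) (hRc : c ∉ R.support)
    (hdQ : d ∉ Q.support)
    (hRlast : ∀ t ∈ R.support, (t ∈ P.support ∨ t ∈ Q.support) → t = z) :
    ∃ (p : G.Walk u c) (q : G.Walk u d), p.IsPath ∧ q.IsPath ∧
      (∀ t, t ∈ p.support → t ∈ q.support → t = u) ∧
      s(c, d) ∉ p.edges ∧ s(c, d) ∉ q.edges := by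
  classical
  have hcnot : c ∉ (P.takeUntil z hzP).support := notMem_takeUntil hP hzP hzc
  have hzQ : z ∉ Q.support := by
    intro h
    rcases hdisj z hzP h with h1 | h1
    · exact hzu h1
    · exact hzc h1
  have hmemR : ∀ t, t ∈ R.reverse.support → t ∈ R.support := by
    intro t ht
    rwa [Walk.support_reverse, List.mem_reverse] at ht
  refine ⟨Q, (P.takeUntil z hzP).append R.reverse, hQ, ?_, ?_, ?_, ?_⟩
  · refine append_isPath (hP.takeUntil hzP) hR.reverse ?_
    intro t htp htr
    exact hRlast t (hmemR t htr) (Or.inl (Walk.support_takeUntil_subset _ _ htp))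
  · intro t htQ htq
    rw [Walk.support_append] at htq
    rcases List.mem_append.mp htq with h1 | h1
    · rcases hdisj t (Walk.support_takeUntil_subset _ _ h1) htQ with h2 | h2
      · exact h2
      · subst h2
        exact absurd h1 hcnot
    · have h2 : t ∈ R.support := hmemR t (List.mem_of_mem_tail h1)
      have h3 := hRlast t h2 (Or.inr htQ)
      subst h3
      exact absurd htQ hzQ
  · intro hmem
    exact hdQ (mem_support_of_mem_edges' hmem (Sym2.mem_mk_right _ _))
  · intro hmem
    have hc : c ∈ ((P.takeUntil z hzP).append R.reverse).support :=
      mem_support_of_mem_edges' hmem (Sym2.mem_mk_left _ _)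
    rw [Walk.support_append] at hc
    rcases List.mem_append.mp hc with h1 | h1
    · exact hcnot h1
    · exact hRc (hmemR c (List.mem_of_mem_tail h1))

lemma vertex_edge (hconn : G.Connected)
    (hcut : ∀ v : V, (G.induce {w | w ≠ v}).Connected)
    (hcard : 3 ≤ Fintype.card V) {u c d : V} (hcd : G.Adj c d)
    (huc : u ≠ c) (hud : u ≠ d) :
    ∃ (p : G.Walk u c) (q : G.Walk u d), p.IsPath ∧ q.IsPath ∧
      (∀ t, t ∈ p.support → t ∈ q.support → t = u) ∧
      s(c, d) ∉ p.edges ∧ s(c, d) ∉ q.edges := by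
  classical
  obtain ⟨P, Q, hP, hQ, hdisj⟩ :=
    two_paths hconn hcut hcard (G.dist u c) u c huc le_rfl
  by_cases hdP : d ∈ P.support
  · exact ve_helper1 hcd hud hP hQ hdisj hdP
  by_cases hdQ : d ∈ Q.support
  · exact ve_helper1 hcd hud hQ hP (fun t a b => (hdisj t b a)) hdQ
  obtain ⟨W2, hW2⟩ := walk_avoid (hcut c) hcd.ne' huc
  have huS : u ∈ {t | t ∈ P.support ∨ t ∈ Q.support} :=
    Or.inl (Walk.start_mem_support _)
  obtain ⟨z, hzS, R, hRpath, hRsub, hRlast⟩ := firstHit W2 _ huS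
  have hRc : c ∉ R.support := fun h => hW2 (hRsub _ h)
  have hzc : z ≠ c := fun h => hRc (h ▸ Walk.end_mem_support R)
  by_cases hzu : z = u
  · subst hzu
    refine ⟨P, R.reverse, hP, hRpath.reverse, ?_, ?_, ?_⟩
    · intro t htP htR
      have h2 : t ∈ R.support := by
        rwa [Walk.support_reverse, List.mem_reverse] at htR
      exact hRlast t h2 (Or.inl htP)
    · intro hmem
      exact hdP (mem_support_of_mem_edges' hmem (Sym2.mem_mk_right _ _))
    · intro hmem
      rw [Walk.edges_reverse, List.mem_reverse] at hmem
      exact hRc (mem_support_of_mem_edges' hmem (Sym2.mem_mk_left _ _))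
  · rcases hzS with hzP | hzQ
    · exact ve_helper2 hcd hP hQ hdisj hRpath hzP hzu hzc hRc hdQ
        (fun t ht hs => hRlast t ht hs)
    · exact ve_helper2 hcd hQ hP (fun t a b => (hdisj t b a)) hRpath hzQ hzu hzc hRc hdP
        (fun t ht hs => hRlast t ht hs.symm)

lemma dp_helper {a b c d z : V} (hza : z ≠ a)
    {P1 : G.Walk a c} {P2 : G.Walk a d} (hP1 : P1.IsPath) (hP2 : P2.IsPath)
    (hshare : ∀ t, t ∈ P1.support → t ∈ P2.support → t = a)
    {R : G.Walk b z} (hR : R.IsPath) (hzP1 : z ∈ P1.support)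
    (hRlast : ∀ t ∈ R.support, (t ∈ P1.support ∨ t ∈ P2.support) → t = z)
    (hRa : a ∉ R.support) :
    ∃ (p : G.Walk b c) (q : G.Walk a d), p.IsPath ∧ q.IsPath ∧
      (∀ t, t ∈ p.support → t ∈ q.support → False) := by
  classical
  have hanot : a ∉ (P1.dropUntil z hzP1).support := notMem_dropUntil hP1 hzP1 hza
  refine ⟨R.append (P1.dropUntil z hzP1), P2, ?_, hP2, ?_⟩
  · refine append_isPath hR (hP1.dropUntil hzP1) ?_
    intro t htr htp
    exact hRlast t htr (Or.inl (Walk.support_dropUntil_subset _ _ htp))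
  · intro t htp htq
    rw [Walk.support_append] at htp
    rcases List.mem_append.mp htp with h1 | h1
    · have h2 := hRlast t h1 (Or.inr htq)
      subst h2
      have h3 := hshare t hzP1 htq
      exact hza h3
    · have h2 : t ∈ (P1.dropUntil z hzP1).support := List.mem_of_mem_tail h1
      have h3 := hshare t (Walk.support_dropUntil_subset _ _ h2) htq
      subst h3
      exact hanot h2

lemma disjoint_paths (hconn : G.Connected)
    (hcut : ∀ v : V, (G.induce {w | w ≠ v}).Connected)
    (hcard : 3 ≤ Fintype.card V) {a b c d : V} (hx : G.Adj a b) (hy : G.Adj c d)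
    (hac : a ≠ c) (had : a ≠ d) (hbc : b ≠ c) (hbd : b ≠ d) :
    (∃ (p : G.Walk b c) (q : G.Walk a d), p.IsPath ∧ q.IsPath ∧
       (∀ t, t ∈ p.support → t ∈ q.support → False)) ∨
    (∃ (p : G.Walk b d) (q : G.Walk a c), p.IsPath ∧ q.IsPath ∧
       (∀ t, t ∈ p.support → t ∈ q.support → False)) := by
  classical
  obtain ⟨P1, P2, hP1, hP2, hshare, hE1, hE2⟩ :=
    vertex_edge hconn hcut hcard hy hac had
  by_cases hbP1 : b ∈ P1.support
  · left
    refine ⟨P1.dropUntil b hbP1, P2, hP1.dropUntil hbP1, hP2, ?_⟩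
    intro t ht1 ht2
    have ht1' : t ∈ P1.support := Walk.support_dropUntil_subset _ _ ht1
    have h1 := hshare t ht1' ht2
    subst h1
    exact (notMem_dropUntil hP1 hbP1 hx.ne') ht1
  by_cases hbP2 : b ∈ P2.support
  · right
    refine ⟨P2.dropUntil b hbP2, P1, hP2.dropUntil hbP2, hP1, ?_⟩
    intro t ht1 ht2
    have ht1' : t ∈ P2.support := Walk.support_dropUntil_subset _ _ ht1
    have h1 := hshare t ht2 ht1'
    subst h1
    exact (notMem_dropUntil hP2 hbP2 hx.ne') ht1
  · obtain ⟨W2, hW2⟩ := walk_avoid (hcut a) hx.ne' (Ne.symm hac)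
    have hcS : c ∈ {t | t ∈ P1.support ∨ t ∈ P2.support} :=
      Or.inl (Walk.end_mem_support _)
    obtain ⟨z, hzS, R, hRpath, hRsub, hRlast⟩ := firstHit W2 _ hcS
    have hRa : a ∉ R.support := fun h => hW2 (hRsub _ h)
    have hza : z ≠ a := fun h => hRa (h ▸ Walk.end_mem_support R)
    rcases hzS with hzP1 | hzP2
    · exact Or.inl (dp_helper hza hP1 hP2 hshare hRpath hzP1
        (fun t ht hs => hRlast t ht hs) hRa)
    · exact Or.inr (dp_helper hza hP2 hP1 (fun t x y => hshare t y x) hRpath hzP2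
        (fun t ht hs => hRlast t ht hs.symm) hRa)

end TwoConn


lemma sym2_exists (z : Sym2 V) : ∃ x y : V, z = s(x, y) :=
  Sym2.ind (fun x y => ⟨x, y, rfl⟩) z

lemma assemble [Fintype V] [DecidableEq V] {G : SimpleGraph V}
    (hconn : G.Connected) (hcut : ∀ v : V, (G.induce {w | w ≠ v}).Connected)
    (hcard : 3 ≤ Fintype.card V)
    {a b c d : V} (hx : G.Adj a b) (hy : G.Adj c d)
    (hxy : s(a, b) ≠ s(c, d)) {s₁ : Set (Sym2 V)}
    (hsubG : s₁ ⊆ G.edgeSet) (hy1 : s(c, d) ∉ s₁) (hx1 : s(a, b) ∉ s₁)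
    (hacy : (SimpleGraph.fromEdgeSet (s₁ ∪ {s(a, b)})).IsAcyclic)
    (hbc : (SimpleGraph.fromEdgeSet s₁).Reachable b c)
    (had : (SimpleGraph.fromEdgeSet s₁).Reachable a d) :
    ∃ t : Set (Sym2 V), t ⊆ G.edgeSet ∧ s(a, b) ∈ t ∧ s(c, d) ∉ t ∧
      (SimpleGraph.fromEdgeSet t).Connected ∧ (SimpleGraph.fromEdgeSet t).IsAcyclic ∧
      (SimpleGraph.fromEdgeSet ((t \ {s(a, b)}) ∪ {s(c, d)})).Connected ∧
      (SimpleGraph.fromEdgeSet ((t \ {s(a, b)}) ∪ {s(c, d)})).IsAcyclic := by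
  have hGy : (G.deleteEdges {s(c, d)}).Connected :=
    connected_deleteEdge_of_biconn hconn hcut hcard hy
  have hsub0 : s₁ ∪ {s(a, b)} ⊆ (G.deleteEdges {s(c, d)}).edgeSet := by
    rw [SimpleGraph.edgeSet_deleteEdges]
    rintro z (hz | hz)
    · exact ⟨hsubG hz, fun h => hy1 (Set.mem_singleton_iff.mp h ▸ hz)⟩
    · rw [Set.mem_singleton_iff] at hz
      subst hz
      exact ⟨(SimpleGraph.mem_edgeSet _).mpr hx, fun h => hxy (Set.mem_singleton_iff.mp h)⟩
  obtain ⟨t, hst, htsub, htc, hta⟩ := exists_spanning_tree hGy hsub0 hacy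
  rw [SimpleGraph.edgeSet_deleteEdges] at htsub
  have htG : t ⊆ G.edgeSet := fun z hz => (htsub hz).1
  have hyt : s(c, d) ∉ t := fun hz => (htsub hz).2 rfl
  have hxt : s(a, b) ∈ t := hst (Or.inr rfl)
  have hs1t : s₁ ⊆ t \ {s(a, b)} :=
    fun z hz => ⟨hst (Or.inl hz), fun h => hx1 (Set.mem_singleton_iff.mp h ▸ hz)⟩
  have hdel : SimpleGraph.fromEdgeSet (t \ {s(a, b)}) =
      (SimpleGraph.fromEdgeSet t).deleteEdges {s(a, b)} :=
    (fromEdgeSet_deleteEdges _ _).symm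
  have hsides : ∀ v : V, (SimpleGraph.fromEdgeSet (t \ {s(a, b)})).Reachable v a ∨
      (SimpleGraph.fromEdgeSet (t \ {s(a, b)})).Reachable v b := by
    intro v
    rw [hdel]
    exact reach_sides (htc v a)
  have hmono1 : SimpleGraph.fromEdgeSet s₁ ≤ SimpleGraph.fromEdgeSet (t \ {s(a, b)}) :=
    SimpleGraph.fromEdgeSet_mono hs1t
  have hmono2 : SimpleGraph.fromEdgeSet (t \ {s(a, b)}) ≤
      SimpleGraph.fromEdgeSet ((t \ {s(a, b)}) ∪ {s(c, d)}) :=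
    SimpleGraph.fromEdgeSet_mono Set.subset_union_left
  have hcd' : (SimpleGraph.fromEdgeSet ((t \ {s(a, b)}) ∪ {s(c, d)})).Adj c d :=
    (SimpleGraph.fromEdgeSet_adj _).mpr ⟨Or.inr rfl, hy.ne⟩
  have hbc' : (SimpleGraph.fromEdgeSet ((t \ {s(a, b)}) ∪ {s(c, d)})).Reachable b c :=
    (hbc.mono hmono1).mono hmono2
  have had' : (SimpleGraph.fromEdgeSet ((t \ {s(a, b)}) ∪ {s(c, d)})).Reachable a d :=
    (had.mono hmono1).mono hmono2
  have ht'conn : (SimpleGraph.fromEdgeSet ((t \ {s(a, b)}) ∪ {s(c, d)})).Connected := by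
    rw [SimpleGraph.connected_iff]
    refine ⟨fun u v => ?_, hconn.nonempty⟩
    have key : ∀ v : V,
        (SimpleGraph.fromEdgeSet ((t \ {s(a, b)}) ∪ {s(c, d)})).Reachable v a := by
      intro v
      rcases hsides v with h1 | h1
      · exact h1.mono hmono2
      · exact (h1.mono hmono2).trans (hbc'.trans (hcd'.reachable.trans had'.symm))
    exact (key u).trans (key v).symm
  have hndt : ∀ z ∈ t, ¬z.IsDiag :=
    fun z hz => SimpleGraph.not_isDiag_of_mem_edgeSet _ (htG hz)
  have hndt' : ∀ z ∈ (t \ {s(a, b)}) ∪ {s(c, d)}, ¬z.IsDiag := by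
    rintro z (hz | hz)
    · exact hndt z hz.1
    · rw [Set.mem_singleton_iff] at hz
      subst hz
      simpa using hy.ne
  have hcardt := tree_set_ncard hndt htc hta
  have ht'card : ((t \ {s(a, b)}) ∪ {s(c, d)}).ncard + 1 ≤ Fintype.card V := by
    have h1 : (t \ {s(a, b)}).ncard = t.ncard - 1 :=
      Set.ncard_diff_singleton_of_mem hxt
    have h2 : ((t \ {s(a, b)}) ∪ {s(c, d)}).ncard ≤ (t \ {s(a, b)}).ncard + 1 := by
      have := Set.ncard_union_le (t \ {s(a, b)}) ({s(c, d)} : Set (Sym2 V))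
      simpa using this
    have h3 : 1 ≤ t.ncard := by
      have := (Set.ncard_pos (Set.toFinite t)).mpr ⟨_, hxt⟩
      omega
    omega
  exact ⟨t, htG, hxt, hyt, htc, hta, ht'conn,
    acyclic_of_connected_card hndt' ht'conn ht'card⟩

/-- The shared-vertex case: edges `s(v,p)` and `s(q,v)`. -/
lemma combo_shared [Fintype V] [DecidableEq V] {G : SimpleGraph V}
    (hconn : G.Connected) (hcut : ∀ v : V, (G.induce {w | w ≠ v}).Connected)
    (hcard : 3 ≤ Fintype.card V) {v p q : V}
    (hvp : G.Adj v p) (hqv : G.Adj q v) (hxy : s(v, p) ≠ s(q, v)) :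
    ∃ t : Set (Sym2 V), t ⊆ G.edgeSet ∧ s(v, p) ∈ t ∧ s(q, v) ∉ t ∧
      (SimpleGraph.fromEdgeSet t).Connected ∧ (SimpleGraph.fromEdgeSet t).IsAcyclic ∧
      (SimpleGraph.fromEdgeSet ((t \ {s(v, p)}) ∪ {s(q, v)})).Connected ∧
      (SimpleGraph.fromEdgeSet ((t \ {s(v, p)}) ∪ {s(q, v)})).IsAcyclic := by
  have hpq : p ≠ q := by
    rintro rfl
    exact hxy (Sym2.eq_swap)
  obtain ⟨P0, hPv0⟩ := walk_avoid (hcut v) hvp.ne' hqv.ne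
  set P := P0.bypass with hPdef
  have hPpath : P.IsPath := P0.bypass_isPath
  have hPv : v ∉ P.support := fun h => hPv0 (P0.support_bypass_subset h)
  set s₁ : Set (Sym2 V) := {z | z ∈ P.edges} with hs₁
  have hvnot : ∀ z ∈ s₁, v ∉ z :=
    fun z hz h => hPv (mem_support_of_mem_edges' hz h)
  have hsubG : s₁ ⊆ G.edgeSet := fun z hz => P.edges_subset_edgeSet hz
  have hacy0 : (SimpleGraph.fromEdgeSet s₁).IsAcyclic := by
    have h0 := path_union_acyclic (s := (∅ : Set (Sym2 V)))
      (by rw [SimpleGraph.fromEdgeSet_empty]; exact SimpleGraph.isAcyclic_bot)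
      P hPpath (by simp)
    rwa [Set.empty_union] at h0
  have hacy : (SimpleGraph.fromEdgeSet (s₁ ∪ {s(v, p)})).IsAcyclic := by
    apply add_edge_acyclic hvp.ne hacy0
    intro hr
    exact hvp.ne (reach_isolated hvnot hr).symm
  have hy1 : s(q, v) ∉ s₁ := fun h => (hvnot _ h) (Sym2.mem_mk_right _ _)
  have hx1 : s(v, p) ∉ s₁ := fun h => (hvnot _ h) (Sym2.mem_mk_left _ _)
  have hbc : (SimpleGraph.fromEdgeSet s₁).Reachable p q := reach_of_walk P
  exact assemble hconn hcut hcard hvp hqv hxy hsubG hy1 hx1 hacy hbc (Reachable.refl _)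

lemma combo_disjoint_core [Fintype V] [DecidableEq V] {G : SimpleGraph V}
    (hconn : G.Connected) (hcut : ∀ v : V, (G.induce {w | w ≠ v}).Connected)
    (hcard : 3 ≤ Fintype.card V) {a b c d : V}
    (hx : G.Adj a b) (hy : G.Adj c d)
    (hac : a ≠ c) (had : a ≠ d) (hbc : b ≠ c) (hbd : b ≠ d)
    {P : G.Walk b c} {Q : G.Walk a d} (hP : P.IsPath) (hQ : Q.IsPath)
    (hdisj : ∀ t, t ∈ P.support → t ∈ Q.support → False) :
    ∃ t : Set (Sym2 V), t ⊆ G.edgeSet ∧ s(a, b) ∈ t ∧ s(c, d) ∉ t ∧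
      (SimpleGraph.fromEdgeSet t).Connected ∧ (SimpleGraph.fromEdgeSet t).IsAcyclic ∧
      (SimpleGraph.fromEdgeSet ((t \ {s(a, b)}) ∪ {s(c, d)})).Connected ∧
      (SimpleGraph.fromEdgeSet ((t \ {s(a, b)}) ∪ {s(c, d)})).IsAcyclic := by
  have hxy : s(a, b) ≠ s(c, d) := by
    intro h
    rw [Sym2.eq_iff] at h
    rcases h with ⟨h1, -⟩ | ⟨h1, -⟩
    · exact hac h1
    · exact had h1
  have haP : a ∉ P.support := fun h => hdisj a h (Walk.start_mem_support _)
  have hdP : d ∉ P.support := fun h => hdisj d h (Walk.end_mem_support _)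
  have hbQ : b ∉ Q.support := fun h => hdisj b (Walk.start_mem_support _) h
  have hcQ : c ∉ Q.support := fun h => hdisj c (Walk.end_mem_support _) h
  set s₁ : Set (Sym2 V) := {z | z ∈ Q.edges} ∪ {z | z ∈ P.edges} with hs₁
  have hsubG : s₁ ⊆ G.edgeSet := by
    rintro z (hz | hz)
    · exact Q.edges_subset_edgeSet hz
    · exact P.edges_subset_edgeSet hz
  have hy1 : s(c, d) ∉ s₁ := by
    rintro (h | h)
    · exact hcQ (mem_support_of_mem_edges' h (Sym2.mem_mk_left _ _))
    · exact hdP (mem_support_of_mem_edges' h (Sym2.mem_mk_right _ _))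
  have hx1 : s(a, b) ∉ s₁ := by
    rintro (h | h)
    · exact hbQ (mem_support_of_mem_edges' h (Sym2.mem_mk_right _ _))
    · exact haP (mem_support_of_mem_edges' h (Sym2.mem_mk_left _ _))
  have hacyQ : (SimpleGraph.fromEdgeSet {z | z ∈ Q.edges}).IsAcyclic := by
    have h0 := path_union_acyclic (s := (∅ : Set (Sym2 V)))
      (by rw [SimpleGraph.fromEdgeSet_empty]; exact SimpleGraph.isAcyclic_bot)
      Q hQ (by simp)
    rwa [Set.empty_union] at h0
  have hacy1 : (SimpleGraph.fromEdgeSet s₁).IsAcyclic := by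
    refine path_union_acyclic hacyQ P hP ?_
    intro t ht z hz htz
    exact hdisj t ht (mem_support_of_mem_edges' hz htz)
  have hnr : ¬(SimpleGraph.fromEdgeSet s₁).Reachable a b := by
    intro hr
    have hA : ∀ z ∈ s₁, ∀ x y : V, z = s(x, y) →
        (x ∈ {t | t ∈ Q.support} ↔ y ∈ {t | t ∈ Q.support}) := by
      rintro z (hz | hz) x y rfl
      · simp only [Set.mem_setOf_eq]
        exact ⟨fun _ => mem_support_of_mem_edges' hz (Sym2.mem_mk_right _ _),
          fun _ => mem_support_of_mem_edges' hz (Sym2.mem_mk_left _ _)⟩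
      · have hxP : x ∈ P.support := mem_support_of_mem_edges' hz (Sym2.mem_mk_left _ _)
        have hyP : y ∈ P.support := mem_support_of_mem_edges' hz (Sym2.mem_mk_right _ _)
        simp only [Set.mem_setOf_eq]
        exact ⟨fun h => absurd h (fun h2 => hdisj x hxP h2),
          fun h => absurd h (fun h2 => hdisj y hyP h2)⟩
    have hbA := reach_invariant hA hr (Walk.start_mem_support Q)
    exact hdisj b (Walk.start_mem_support P) hbA
  have hacy : (SimpleGraph.fromEdgeSet (s₁ ∪ {s(a, b)})).IsAcyclic :=
    add_edge_acyclic hx.ne hacy1 hnr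
  have hbc' : (SimpleGraph.fromEdgeSet s₁).Reachable b c :=
    (reach_of_walk P).mono (SimpleGraph.fromEdgeSet_mono Set.subset_union_right)
  have had' : (SimpleGraph.fromEdgeSet s₁).Reachable a d :=
    (reach_of_walk Q).mono (SimpleGraph.fromEdgeSet_mono Set.subset_union_left)
  exact assemble hconn hcut hcard hx hy hxy hsubG hy1 hx1 hacy hbc' had'

lemma combo_disjoint [Fintype V] [DecidableEq V] {G : SimpleGraph V}
    (hconn : G.Connected) (hcut : ∀ v : V, (G.induce {w | w ≠ v}).Connected)
    (hcard : 3 ≤ Fintype.card V) {a b c d : V}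
    (hx : G.Adj a b) (hy : G.Adj c d)
    (hac : a ≠ c) (had : a ≠ d) (hbc : b ≠ c) (hbd : b ≠ d) :
    ∃ t : Set (Sym2 V), t ⊆ G.edgeSet ∧ s(a, b) ∈ t ∧ s(c, d) ∉ t ∧
      (SimpleGraph.fromEdgeSet t).Connected ∧ (SimpleGraph.fromEdgeSet t).IsAcyclic ∧
      (SimpleGraph.fromEdgeSet ((t \ {s(a, b)}) ∪ {s(c, d)})).Connected ∧
      (SimpleGraph.fromEdgeSet ((t \ {s(a, b)}) ∪ {s(c, d)})).IsAcyclic := by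
  rcases disjoint_paths hconn hcut hcard hx hy hac had hbc hbd with
    ⟨P, Q, hP, hQ, hdisj⟩ | ⟨P, Q, hP, hQ, hdisj⟩
  · exact combo_disjoint_core hconn hcut hcard hx hy hac had hbc hbd hP hQ hdisj
  · rw [show s(c, d) = s(d, c) from Sym2.eq_swap]
    exact combo_disjoint_core hconn hcut hcard hx hy.symm had hac hbd hbc hP hQ hdisj

lemma finish_step (K : Type*) [Field K] [Fintype V] {G : SimpleGraph V} {n : ℕ}
    {e : Fin n → Sym2 V} (he : Function.Injective e)
    (hrange : Set.range e = G.edgeSet) {i j : Fin n} (hij : i ≠ j)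
    {t : Set (Sym2 V)} (htG : t ⊆ G.edgeSet) (hxt : e i ∈ t) (hyt : e j ∉ t)
    (h4 : (SimpleGraph.fromEdgeSet t).Connected)
    (h5 : (SimpleGraph.fromEdgeSet t).IsAcyclic)
    (h6 : (SimpleGraph.fromEdgeSet ((t \ {e i}) ∪ {e j})).Connected)
    (h7 : (SimpleGraph.fromEdgeSet ((t \ {e i}) ∪ {e j})).IsAcyclic) :
    ∃ S T : Finset (Fin n), IsSpanningForestIdx e S ∧ IsSpanningForestIdx e T ∧
      MvPolynomial.X i * sqMon K S = MvPolynomial.X j * sqMon K T := by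
  classical
  have ht'G : (t \ {e i}) ∪ {e j} ⊆ G.edgeSet := by
    rintro z (hz | hz)
    · exact htG hz.1
    · rw [Set.mem_singleton_iff] at hz
      subst hz
      rw [← hrange]
      exact Set.mem_range_self j
  have himg : ∀ (u : Set (Sym2 V)), u ⊆ G.edgeSet →
      e '' ↑((Set.toFinite {k | e k ∈ u}).toFinset) = u := by
    intro u hu
    ext z
    simp only [Set.Finite.coe_toFinset, Set.mem_image, Set.mem_setOf_eq]
    constructor
    · rintro ⟨k, hk, rfl⟩
      exact hk
    · intro hz
      have hz2 : z ∈ Set.range e := hrange ▸ hu hz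
      obtain ⟨k, rfl⟩ := hz2
      exact ⟨k, hz, rfl⟩
  refine ⟨(Set.toFinite {k | e k ∈ (t \ {e i}) ∪ {e j}}).toFinset,
    (Set.toFinite {k | e k ∈ t}).toFinset, ?_, ?_, ?_⟩
  · rw [IsSpanningForestIdx, himg _ ht'G]
    exact ⟨h6, h7⟩
  · rw [IsSpanningForestIdx, himg _ htG]
    exact ⟨h4, h5⟩
  · have hiT : i ∈ (Set.toFinite {k | e k ∈ t}).toFinset := by
      rw [Set.Finite.mem_toFinset]
      exact hxt
    have hjT : j ∉ (Set.toFinite {k | e k ∈ t}).toFinset := by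
      rw [Set.Finite.mem_toFinset]
      exact hyt
    have hiS : i ∉ (Set.toFinite {k | e k ∈ (t \ {e i}) ∪ {e j}}).toFinset := by
      rw [Set.Finite.mem_toFinset]
      rintro (⟨-, h⟩ | h)
      · exact h rfl
      · exact hij (he h)
    have hins : insert i ((Set.toFinite {k | e k ∈ (t \ {e i}) ∪ {e j}}).toFinset) =
        insert j ((Set.toFinite {k | e k ∈ t}).toFinset) := by
      ext k
      simp only [Finset.mem_insert, Set.Finite.mem_toFinset, Set.mem_setOf_eq,
        Set.mem_union, Set.mem_diff, Set.mem_singleton_iff]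
      constructor
      · rintro (rfl | ⟨hk, -⟩ | hk)
        · exact Or.inr hxt
        · exact Or.inr hk
        · exact Or.inl (he hk)
      · rintro (rfl | hk)
        · exact Or.inr (Or.inr rfl)
        · by_cases hki : k = i
          · exact Or.inl hki
          · exact Or.inr (Or.inl ⟨hk, fun h => hki (he h)⟩)
    rw [sqMon, sqMon, ← Finset.prod_insert hiS, ← Finset.prod_insert hjT, hins]

end Stmt1Aux




theorem stmt1 (K : Type*) [Field K] {V : Type*} [Fintype V] (G : SimpleGraph V)
    (n : ℕ) (e : Fin n → Sym2 V) (he : Function.Injective e)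
    (hrange : Set.range e = G.edgeSet)
    (hconn : G.Connected) (hcut : ∀ v : V, (G.induce {w | w ≠ v}).Connected)
    (I : Ideal (MvPolynomial (Fin n) K))
    (hI : I = Ideal.span (sqMon K '' {S : Finset (Fin n) | IsSpanningForestIdx e S})) :
    ∀ i j : Fin n, i ≠ j →
      ∃ S T : Finset (Fin n), IsSpanningForestIdx e S ∧ IsSpanningForestIdx e T ∧
        X i * sqMon K S = X j * sqMon K T := by
  classical
  intro i j hij
  have hneij : e i ≠ e j := fun h => hij (he h)
  have hxE : e i ∈ G.edgeSet := by rw [← hrange]; exact Set.mem_range_self i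
  have hyE : e j ∈ G.edgeSet := by rw [← hrange]; exact Set.mem_range_self j
  obtain ⟨a, b, hab⟩ := Stmt1Aux.sym2_exists (e i)
  obtain ⟨c, d, hcd⟩ := Stmt1Aux.sym2_exists (e j)
  have hxadj : G.Adj a b := (SimpleGraph.mem_edgeSet _).mp (hab ▸ hxE)
  have hyadj : G.Adj c d := (SimpleGraph.mem_edgeSet _).mp (hcd ▸ hyE)
  have hcard : 3 ≤ Fintype.card V := by
    by_contra hlt
    push_neg at hlt
    have h2 : ({a, b} : Finset V).card = 2 := by
      rw [Finset.card_insert_of_notMem (by simpa using hxadj.ne), Finset.card_singleton]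
    have huniv : ({a, b} : Finset V) = Finset.univ := by
      apply Finset.eq_univ_of_card
      have hle : ({a, b} : Finset V).card ≤ Fintype.card V := by
        rw [← Finset.card_univ]
        exact Finset.card_le_univ _
      omega
    have hmem : ∀ v : V, v = a ∨ v = b := by
      intro v
      have hv : v ∈ ({a, b} : Finset V) := huniv ▸ Finset.mem_univ v
      simpa using hv
    have hxyne : s(a, b) ≠ s(c, d) := fun h => hneij (by rw [hab, hcd, h])
    rcases hmem c with rfl | rfl <;> rcases hmem d with rfl | rfl
    · exact hyadj.ne rfl
    · exact hxyne rfl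
    · exact hxyne Sym2.eq_swap
    · exact hyadj.ne rfl
  by_cases h1 : a = c
  · subst h1
    have hcd' : e j = s(d, a) := hcd.trans Sym2.eq_swap
    have hxy' : s(a, b) ≠ s(d, a) := fun h => hneij (hab.trans (h.trans hcd'.symm))
    obtain ⟨t, htG, hxt, hyt, h4, h5, h6, h7⟩ :=
      Stmt1Aux.combo_shared hconn hcut hcard hxadj hyadj.symm hxy'
    rw [← hab] at hxt h6 h7
    rw [← hcd'] at hyt h6 h7
    exact Stmt1Aux.finish_step K he hrange hij htG hxt hyt h4 h5 h6 h7
  by_cases h2 : a = d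
  · subst h2
    have hxy' : s(a, b) ≠ s(c, a) := fun h => hneij (hab.trans (h.trans hcd.symm))
    obtain ⟨t, htG, hxt, hyt, h4, h5, h6, h7⟩ :=
      Stmt1Aux.combo_shared hconn hcut hcard hxadj hyadj hxy'
    rw [← hab] at hxt h6 h7
    rw [← hcd] at hyt h6 h7
    exact Stmt1Aux.finish_step K he hrange hij htG hxt hyt h4 h5 h6 h7
  by_cases h3 : b = c
  · subst h3
    have hab' : e i = s(b, a) := hab.trans Sym2.eq_swap
    have hcd' : e j = s(d, b) := hcd.trans Sym2.eq_swap
    have hxy' : s(b, a) ≠ s(d, b) := fun h => hneij (hab'.trans (h.trans hcd'.symm))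
    obtain ⟨t, htG, hxt, hyt, h4, h5, h6, h7⟩ :=
      Stmt1Aux.combo_shared hconn hcut hcard hxadj.symm hyadj.symm hxy'
    rw [← hab'] at hxt h6 h7
    rw [← hcd'] at hyt h6 h7
    exact Stmt1Aux.finish_step K he hrange hij htG hxt hyt h4 h5 h6 h7
  by_cases h4 : b = d
  · subst h4
    have hab' : e i = s(b, a) := hab.trans Sym2.eq_swap
    have hxy' : s(b, a) ≠ s(c, b) := fun h => hneij (hab'.trans (h.trans hcd.symm))
    obtain ⟨t, htG, hxt, hyt, h4, h5, h6, h7⟩ :=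
      Stmt1Aux.combo_shared hconn hcut hcard hxadj.symm hyadj hxy'
    rw [← hab'] at hxt h6 h7
    rw [← hcd] at hyt h6 h7
    exact Stmt1Aux.finish_step K he hrange hij htG hxt hyt h4 h5 h6 h7
  · obtain ⟨t, htG, hxt, hyt, h4', h5', h6', h7'⟩ :=
      Stmt1Aux.combo_disjoint hconn hcut hcard hxadj hyadj h1 h2 h3 h4
    rw [← hab] at hxt h6' h7'
    rw [← hcd] at hyt h6' h7'
    exact Stmt1Aux.finish_step K he hrange hij htG hxt hyt h4' h5' h6' h7'
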